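/- For all positive integers M_t, M_r and all positive integers M_c ≤ M_c', the region D_CSI(M_t,M_c,M_r) is contained in the region D_CSI(M_t,M_c',M_r); that is, the delayed-feedback DoF region is monotone nondecreasing in the number of cognitive-relay antennas. -/

import Mathlib

/-- The delayed-feedback DoF region of the two-user MIMO interference channel
with a cognitive relay, with `Mt` antennas per transmitter, `Mc` antennas at
the cognitive relay, and `Mr` antennas per receiver. -/
def DCSI (Mt Mc Mr : ℕ) : Set (ℝ × ℝ) :=
  {p : ℝ × ℝ | 0 ≤ p.1 ∧ 0 ≤ p.2 ∧
    p.1 ≤ min (Mr : ℝ) ((Mt : ℝ) + (Mc : ℝ)) ∧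
    p.2 ≤ min (Mr : ℝ) ((Mt : ℝ) + (Mc : ℝ)) ∧
    p.1 / min (Mr : ℝ) ((Mt : ℝ) + (Mc : ℝ))
      + p.2 / min (2 * (Mr : ℝ)) ((Mt : ℝ) + (Mc : ℝ))
      ≤ min (Mr : ℝ) (2 * (Mt : ℝ) + (Mc : ℝ)) / min (Mr : ℝ) ((Mt : ℝ) + (Mc : ℝ)) ∧
    p.1 / min (2 * (Mr : ℝ)) ((Mt : ℝ) + (Mc : ℝ))
      + p.2 / min (Mr : ℝ) ((Mt : ℝ) + (Mc : ℝ))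
      ≤ min (Mr : ℝ) (2 * (Mt : ℝ) + (Mc : ℝ)) / min (Mr : ℝ) ((Mt : ℝ) + (Mc : ℝ))}

/-- The no-feedback DoF region of the two-user MIMO interference channel
with a cognitive relay. -/
def Dno (Mt Mc Mr : ℕ) : Set (ℝ × ℝ) :=
  {p : ℝ × ℝ | 0 ≤ p.1 ∧ 0 ≤ p.2 ∧
    p.1 ≤ min (Mr : ℝ) ((Mt : ℝ) + (Mc : ℝ)) ∧
    p.2 ≤ min (Mr : ℝ) ((Mt : ℝ) + (Mc : ℝ)) ∧
    p.1 + p.2 ≤ min (Mr : ℝ) (2 * (Mt : ℝ) + (Mc : ℝ))}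


lemma key_ineq (a b c a' b' c' p1 p2 : ℝ) (ha : 0 < a) (hb : 0 < b)
    (ha' : 0 < a') (hb' : 0 < b') (hp2 : 0 ≤ p2) (hab : a' * b ≤ a * b')
    (hc : c ≤ c') (H : p1 / a + p2 / b ≤ c / a) : p1 / a' + p2 / b' ≤ c' / a' := by
  rw [div_add_div _ _ (ne_of_gt ha) (ne_of_gt hb), div_le_div_iff₀ (by positivity) ha] at H
  rw [div_add_div _ _ (ne_of_gt ha') (ne_of_gt hb'), div_le_div_iff₀ (by positivity) ha']
  have h1 : p1 * b + a * p2 ≤ c * b := by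
    have := (mul_le_mul_iff_of_pos_right ha).mp (by nlinarith : (p1 * b + a * p2) * a ≤ (c * b) * a)
    linarith
  nlinarith [mul_le_mul_of_nonneg_right hab hp2, mul_le_mul_of_nonneg_right h1 (le_of_lt hb'),
    mul_pos hb hb', mul_le_mul_of_nonneg_right hc (le_of_lt (mul_pos hb hb'))]

/-- The delayed-feedback DoF region of the MIMO ICCR is monotone nondecreasing
in the number of cognitive-relay antennas. -/
theorem DCSI_mono_relay (Mt Mr Mc Mc' : ℕ) (hMt : 0 < Mt) (hMr : 0 < Mr)
    (hMc : 0 < Mc) (hMc' : 0 < Mc') (h : Mc ≤ Mc') :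
    DCSI Mt Mc Mr ⊆ DCSI Mt Mc' Mr := by
  intro p hp
  obtain ⟨h1, h2, h3, h4, h5, h6⟩ := hp
  have hr : (0:ℝ) < Mr := by exact_mod_cast hMr
  have hx : (0:ℝ) < (Mt:ℝ) + Mc := by positivity
  have hx' : (0:ℝ) < (Mt:ℝ) + Mc' := by positivity
  have hxx : (Mt:ℝ) + Mc ≤ (Mt:ℝ) + Mc' := by
    have : (Mc:ℝ) ≤ Mc' := by exact_mod_cast h
    linarith
  have ha : (0:ℝ) < min (Mr:ℝ) ((Mt:ℝ) + Mc) := lt_min hr hx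
  have ha' : (0:ℝ) < min (Mr:ℝ) ((Mt:ℝ) + Mc') := lt_min hr hx'
  have hb : (0:ℝ) < min (2*(Mr:ℝ)) ((Mt:ℝ) + Mc) := lt_min (by linarith) hx
  have hb' : (0:ℝ) < min (2*(Mr:ℝ)) ((Mt:ℝ) + Mc') := lt_min (by linarith) hx'
  have haa : min (Mr:ℝ) ((Mt:ℝ) + Mc) ≤ min (Mr:ℝ) ((Mt:ℝ) + Mc') :=
    min_le_min le_rfl hxx
  have hcc : min (Mr:ℝ) (2*(Mt:ℝ) + Mc) ≤ min (Mr:ℝ) (2*(Mt:ℝ) + Mc') := by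
    apply min_le_min le_rfl
    have : (Mc:ℝ) ≤ Mc' := by exact_mod_cast h
    linarith
  have hab : min (Mr:ℝ) ((Mt:ℝ) + Mc') * min (2*(Mr:ℝ)) ((Mt:ℝ) + Mc)
      ≤ min (Mr:ℝ) ((Mt:ℝ) + Mc) * min (2*(Mr:ℝ)) ((Mt:ℝ) + Mc') := by
    rcases le_total ((Mt:ℝ) + Mc) (Mr:ℝ) with hle | hle
    · rw [min_eq_right hle, min_eq_right (by linarith : (Mt:ℝ) + Mc ≤ 2*(Mr:ℝ))]
      have h1 : min (Mr:ℝ) ((Mt:ℝ) + Mc') ≤ min (2*(Mr:ℝ)) ((Mt:ℝ) + Mc') :=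
        min_le_min (by linarith) le_rfl
      nlinarith
    · rw [min_eq_left hle, min_eq_left (le_trans hle hxx)]
      have h1 : min (2*(Mr:ℝ)) ((Mt:ℝ) + Mc) ≤ min (2*(Mr:ℝ)) ((Mt:ℝ) + Mc') :=
        min_le_min le_rfl hxx
      nlinarith
  refine ⟨h1, h2, le_trans h3 haa, le_trans h4 haa, ?_, ?_⟩
  · exact key_ineq _ _ _ _ _ _ _ _ ha hb ha' hb' h2 hab hcc h5
  · have h6' : p.2 / min (Mr:ℝ) ((Mt:ℝ) + Mc) + p.1 / min (2*(Mr:ℝ)) ((Mt:ℝ) + Mc)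
        ≤ min (Mr:ℝ) (2*(Mt:ℝ) + Mc) / min (Mr:ℝ) ((Mt:ℝ) + Mc) := by linarith
    have := key_ineq _ _ _ _ _ _ _ _ ha hb ha' hb' h1 hab hcc h6'
    linarith
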